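/- Let G = (V, E_1, …, E_N) be an infinite, locally finite, connected edge-coloured graph with N colours, and fix p ∈ [0,1]^{N−1} and q ∈ [0,1]. Let x ∈ V, let S ⊆ V be finite with x ∈ S, let A ⊆ V be finite with A \ S ≠ ∅, and let u ∈ A \ S. Then P_{p,q}(x ↔_A u) ≤ Σ_{i=1}^{N} Σ_{{y,z} ∈ ΔS ∩ E_i, y∈S, z∉S} p_i · P_{p,q}(x ↔_S y) · P_{p,q}(z ↔_A u), where p_N = q. -/

import Mathlib

open MeasureTheory ENNReal Set
open scoped Classical

namespace InhomPerc

variable {V : Type*} {N : ℕ}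

/-- The edge set of an edge-coloured graph: the union of all colour classes. -/
def Eset (E : Fin N → Set (Sym2 V)) : Set (Sym2 V) := ⋃ i, E i

/-- The colour classes are mutually disjoint. -/
def DisjointColours (E : Fin N → Set (Sym2 V)) : Prop :=
  ∀ i j : Fin N, i ≠ j → Disjoint (E i) (E j)

/-- Every edge is a pair of two *distinct* vertices. -/
def NoLoops (E : Fin N → Set (Sym2 V)) : Prop := ∀ e ∈ Eset E, ¬ e.IsDiag

/-- The underlying simple graph of the edge-coloured graph. -/
def graph (E : Fin N → Set (Sym2 V)) : SimpleGraph V where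
  Adj u v := u ≠ v ∧ s(u, v) ∈ Eset E
  symm := ⟨by
    intro u v h
    refine ⟨h.1.symm, ?_⟩
    rw [Sym2.eq_swap]
    exact h.2⟩
  loopless := ⟨fun v h => h.1 rfl⟩

/-- Local finiteness: every vertex lies in finitely many edges. -/
def LocFin (E : Fin N → Set (Sym2 V)) : Prop :=
  ∀ v : V, {e ∈ Eset E | v ∈ e}.Finite

/-- Connectivity of the edge-coloured graph. -/
def ConnectedGraph (E : Fin N → Set (Sym2 V)) : Prop := (graph E).Connected

/-- Quasi-transitivity: the vertices can be partitioned into finitely many classes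
such that vertices in the same class are related by a coloured graph automorphism. -/
def QuasiTransitive (E : Fin N → Set (Sym2 V)) : Prop :=
  ∃ (k : ℕ) (c : V → Fin k), ∀ u v : V, c u = c v →
    ∃ f : V ≃ V, (∀ (i : Fin N) (e : Sym2 V), e ∈ E i ↔ e.map f ∈ E i) ∧ f v = u

/-- Graph distance. -/
noncomputable def dist (E : Fin N → Set (Sym2 V)) (u v : V) : ℕ := (graph E).dist u v

/-- Percolation configurations: each (potential) edge is open (`true`) or closed. -/
abbrev Config (V : Type*) := Sym2 V → Bool

/-- `x` is joined to `y` by a path of open edges all of whose endpoints lie in `S`. -/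
def ConnIn (E : Fin N → Set (Sym2 V)) (ω : Config V) (S : Set V) (x y : V) : Prop :=
  Relation.ReflTransGen
    (fun a b => a ∈ S ∧ b ∈ S ∧ s(a, b) ∈ Eset E ∧ ω s(a, b) = true) x y

/-- The open cluster of `x`. -/
def cluster (E : Fin N → Set (Sym2 V)) (ω : Config V) (x : V) : Set V :=
  {y | ConnIn E ω Set.univ x y}

/-- The retention probability of an edge `e` under the parameter vector `r`:
`r i` for an edge of colour `i`, `0` for non-edges (by disjointness at most one
summand is nonzero). -/
noncomputable def edgeProb (E : Fin N → Set (Sym2 V)) (r : Fin N → ℝ) (e : Sym2 V) : ℝ :=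
  ∑ i : Fin N, if e ∈ E i then r i else 0

/-- `P` is the family of inhomogeneous percolation (product) measures: for each valid
parameter vector `r` it is a probability measure whose cylinder probabilities are the
products of the individual edge-retention probabilities. -/
def IsPercFamily (E : Fin N → Set (Sym2 V)) (P : (Fin N → ℝ) → Measure (Config V)) : Prop :=
  ∀ r : Fin N → ℝ, (∀ i, r i ∈ Icc (0 : ℝ) 1) →
    IsProbabilityMeasure (P r) ∧
    ∀ (F : Finset (Sym2 V)) (σ : Sym2 V → Bool),
      P r {ω | ∀ e ∈ F, ω e = σ e} =
        ∏ e ∈ F, ENNReal.ofReal (if σ e then edgeProb E r e else 1 - edgeProb E r e)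

/-- The full parameter vector `(p₁, …, p_{N-1}, q)`. -/
noncomputable def pFull (N : ℕ) (p : Fin (N - 1) → ℝ) (q : ℝ) : Fin N → ℝ :=
  fun i => if h : (i : ℕ) < N - 1 then p ⟨i, h⟩ else q

/-- The percolation function `θ`. -/
noncomputable def theta (E : Fin N → Set (Sym2 V)) (P : (Fin N → ℝ) → Measure (Config V))
    (r : Fin N → ℝ) : ℝ≥0∞ :=
  ⨆ x : V, P r {ω | (cluster E ω x).Infinite}

/-- The susceptibility `χ`. -/
noncomputable def chi (E : Fin N → Set (Sym2 V)) (P : (Fin N → ℝ) → Measure (Config V))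
    (r : Fin N → ℝ) : ℝ≥0∞ :=
  ⨆ x : V, ∫⁻ ω, ((cluster E ω x).encard : ℝ≥0∞) ∂(P r)

/-- The `θ`-critical surface. -/
noncomputable def qTheta (E : Fin N → Set (Sym2 V)) (P : (Fin N → ℝ) → Measure (Config V))
    (p : Fin (N - 1) → ℝ) : ℝ :=
  sInf (insert (1 : ℝ) {q | q ∈ Icc (0 : ℝ) 1 ∧ 0 < theta E P (pFull N p q)})

/-- The `χ`-critical surface. -/
noncomputable def qChi (E : Fin N → Set (Sym2 V)) (P : (Fin N → ℝ) → Measure (Config V))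
    (p : Fin (N - 1) → ℝ) : ℝ :=
  sInf (insert (1 : ℝ) {q | q ∈ Icc (0 : ℝ) 1 ∧ chi E P (pFull N p q) = ⊤})

/-- `ψ_{p,q}(x,S) = Σᵢ pᵢ Σ_{{y,z} ∈ ΔS ∩ Eᵢ} P(x ↔_S y)` (each boundary edge
is enumerated by its unique orientation `y ∈ S`, `z ∉ S`). -/
noncomputable def psi (E : Fin N → Set (Sym2 V)) (P : (Fin N → ℝ) → Measure (Config V))
    (r : Fin N → ℝ) (x : V) (S : Finset V) : ℝ≥0∞ :=
  ∑ i : Fin N, ENNReal.ofReal (r i) *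
    ∑ y ∈ S, ∑' z : V,
      (if z ∉ S ∧ s(y, z) ∈ E i then P r {ω | ConnIn E ω ↑S x y} else 0)

/-- The `ψ`-critical surface. -/
noncomputable def qPsi (E : Fin N → Set (Sym2 V)) (P : (Fin N → ℝ) → Measure (Config V))
    (p : Fin (N - 1) → ℝ) : ℝ :=
  sSup {q | q ∈ Icc (0 : ℝ) 1 ∧
    ∀ x : V, ∃ S : Finset V, x ∈ S ∧ psi E P (pFull N p q) x S < 1}

/-- The event that `x` is joined by an open path to `∂Λ_k^x` (the set of vertices
at graph distance exactly `k` from `x`). -/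
def ConnSphere (E : Fin N → Set (Sym2 V)) (ω : Config V) (x : V) (k : ℕ) : Prop :=
  ∃ y : V, dist E x y = k ∧ ConnIn E ω Set.univ x y

/-! ### Auxiliary machinery for the BK-type bound -/

section BKAux

/-- Cylinder event: configurations agreeing with `σ` on `F`. -/
def Cyl (F : Finset (Sym2 V)) (σ : Sym2 V → Bool) : Set (Config V) :=
  {ω | ∀ e ∈ F, ω e = σ e}

/-- `T` depends only on the coordinates in `F`. -/
def DepOn (T : Set (Config V)) (F : Finset (Sym2 V)) : Prop :=
  ∀ ω ω' : Config V, (∀ e ∈ F, ω e = ω' e) → ω ∈ T → ω' ∈ T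

lemma DepOn.mono' {T : Set (Config V)} {F F' : Finset (Sym2 V)} (h : DepOn T F)
    (hFF : F ⊆ F') : DepOn T F' :=
  fun ω ω' hag => h ω ω' fun e he => hag e (hFF he)

lemma measurableSet_cyl (F : Finset (Sym2 V)) (σ : Sym2 V → Bool) :
    MeasurableSet (Cyl F σ) := by
  have : Cyl F σ = ⋂ e ∈ F, (fun ω : Config V => ω e) ⁻¹' {σ e} := by
    ext ω; simp [Cyl]
  rw [this]
  exact MeasurableSet.biInter F.countable_toSet fun e _ =>
    measurable_pi_apply e (measurableSet_singleton (σ e))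

/-- Canonical extension of a pattern on `F` by `false`. -/
noncomputable def extF (F : Finset (Sym2 V)) (τ : {e // e ∈ F} → Bool) : Config V :=
  fun e => if h : e ∈ F then τ ⟨e, h⟩ else false

lemma depOn_eq_iUnion {T : Set (Config V)} {F : Finset (Sym2 V)} (h : DepOn T F) :
    T = ⋃ τ : {e // e ∈ F} → Bool,
      if extF F τ ∈ T then Cyl F (extF F τ) else (∅ : Set (Config V)) := by
  ext ω
  constructor
  · intro hω
    refine Set.mem_iUnion.mpr ⟨fun e => ω e.1, ?_⟩
    have hag : ∀ e ∈ F, ω e = extF F (fun e => ω e.1) e := by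
      intro e he; simp [extF, he]
    have hmem : extF F (fun e => ω e.1) ∈ T := h ω _ hag hω
    rw [if_pos hmem]
    exact hag
  · intro hω
    obtain ⟨τ, hτ⟩ := Set.mem_iUnion.mp hω
    by_cases hm : extF F τ ∈ T
    · rw [if_pos hm] at hτ
      exact h _ ω (fun e he => (hτ e he).symm) hm
    · rw [if_neg hm] at hτ; exact absurd hτ (Set.notMem_empty ω)

lemma pairwise_disjoint_cyl_pieces (F : Finset (Sym2 V))
    (s : ({e // e ∈ F} → Bool) → Set (Config V))
    (hs : ∀ τ, s τ ⊆ Cyl F (extF F τ)) :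
    Pairwise (Function.onFun Disjoint s) := by
  intro τ τ' hne
  refine Set.disjoint_left.mpr fun ω hω hω' => hne ?_
  funext e
  have h1 : ω e.1 = extF F τ e.1 := hs τ hω e.1 e.2
  have h2 : ω e.1 = extF F τ' e.1 := hs τ' hω' e.1 e.2
  have h3 : extF F τ e.1 = extF F τ' e.1 := h1.symm.trans h2
  simpa [extF, e.2] using h3

lemma DepOn.measurableSet {T : Set (Config V)} {F : Finset (Sym2 V)} (h : DepOn T F) :
    MeasurableSet T := by
  rw [depOn_eq_iUnion h]
  refine MeasurableSet.iUnion fun τ => ?_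
  split
  · exact measurableSet_cyl _ _
  · exact MeasurableSet.empty

lemma measure_depOn (μ : Measure (Config V)) {T : Set (Config V)} {F : Finset (Sym2 V)}
    (h : DepOn T F) :
    μ T = ∑' τ : {e // e ∈ F} → Bool,
      if extF F τ ∈ T then μ (Cyl F (extF F τ)) else 0 := by
  have hdis := pairwise_disjoint_cyl_pieces F
    (fun τ => if extF F τ ∈ T then Cyl F (extF F τ) else (∅ : Set (Config V)))
    (fun τ => by split <;> simp)
  have hm : ∀ τ : {e // e ∈ F} → Bool,
      MeasurableSet (if extF F τ ∈ T then Cyl F (extF F τ) else (∅ : Set (Config V))) := by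
    intro τ; split
    · exact measurableSet_cyl _ _
    · exact MeasurableSet.empty
  conv_lhs => rw [depOn_eq_iUnion h]
  rw [measure_iUnion hdis hm]
  refine tsum_congr fun τ => ?_
  split <;> simp

lemma cyl_inter_cyl {F1 F2 : Finset (Sym2 V)} (hd : Disjoint F1 F2)
    (σ1 σ2 : Sym2 V → Bool) :
    Cyl F1 σ1 ∩ Cyl F2 σ2 =
      Cyl (F1 ∪ F2) (fun e => if e ∈ F1 then σ1 e else σ2 e) := by
  ext ω
  simp only [Cyl, Set.mem_inter_iff, Set.mem_setOf_eq, Finset.mem_union]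
  constructor
  · rintro ⟨h1, h2⟩ e he
    rcases he with he | he
    · rw [if_pos he]; exact h1 e he
    · rw [if_neg fun h' => Finset.disjoint_left.mp hd h' he]; exact h2 e he
  · intro hh
    constructor
    · intro e he; have := hh e (Or.inl he); rwa [if_pos he] at this
    · intro e he; have := hh e (Or.inr he)
      rwa [if_neg fun h' => Finset.disjoint_left.mp hd h' he] at this

lemma measure_cyl_inter (μ : Measure (Config V)) (w : Sym2 V → Bool → ℝ≥0∞)
    (hcyl : ∀ (F : Finset (Sym2 V)) (σ : Sym2 V → Bool), μ (Cyl F σ) = ∏ e ∈ F, w e (σ e))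
    {T2 : Set (Config V)} {F1 F2 : Finset (Sym2 V)} (σ : Sym2 V → Bool)
    (h2 : DepOn T2 F2) (hd : Disjoint F1 F2) :
    μ (Cyl F1 σ ∩ T2) = μ (Cyl F1 σ) * μ T2 := by
  have key : ∀ σ2 : Sym2 V → Bool,
      μ (Cyl F1 σ ∩ Cyl F2 σ2) = μ (Cyl F1 σ) * μ (Cyl F2 σ2) := by
    intro σ2
    rw [cyl_inter_cyl hd, hcyl, hcyl, hcyl, Finset.prod_union hd]
    congr 1
    · exact Finset.prod_congr rfl fun e he => by rw [if_pos he]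
    · exact Finset.prod_congr rfl fun e he =>
        by rw [if_neg fun h' => Finset.disjoint_left.mp hd h' he]
  have hdecomp : Cyl F1 σ ∩ T2 = ⋃ τ : {e // e ∈ F2} → Bool,
      if extF F2 τ ∈ T2 then Cyl F1 σ ∩ Cyl F2 (extF F2 τ) else (∅ : Set (Config V)) := by
    conv_lhs => rw [depOn_eq_iUnion h2]
    rw [Set.inter_iUnion]
    refine Set.iUnion_congr fun τ => ?_
    split <;> simp
  have hdis := pairwise_disjoint_cyl_pieces F2
    (fun τ => if extF F2 τ ∈ T2 then Cyl F1 σ ∩ Cyl F2 (extF F2 τ) else (∅ : Set (Config V)))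
    (fun τ => by split
                 · exact Set.inter_subset_right
                 · simp)
  have hm : ∀ τ : {e // e ∈ F2} → Bool, MeasurableSet
      (if extF F2 τ ∈ T2 then Cyl F1 σ ∩ Cyl F2 (extF F2 τ) else (∅ : Set (Config V))) := by
    intro τ; split
    · exact (measurableSet_cyl _ _).inter (measurableSet_cyl _ _)
    · exact MeasurableSet.empty
  rw [hdecomp, measure_iUnion hdis hm]
  rw [measure_depOn μ h2, ENNReal.tsum_mul_left.symm]
  refine tsum_congr fun τ => ?_
  split
  · rw [key]
  · simp

lemma measure_indep (μ : Measure (Config V)) (w : Sym2 V → Bool → ℝ≥0∞)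
    (hcyl : ∀ (F : Finset (Sym2 V)) (σ : Sym2 V → Bool), μ (Cyl F σ) = ∏ e ∈ F, w e (σ e))
    {T1 T2 : Set (Config V)} {F1 F2 : Finset (Sym2 V)}
    (h1 : DepOn T1 F1) (h2 : DepOn T2 F2) (hd : Disjoint F1 F2) :
    μ (T1 ∩ T2) = μ T1 * μ T2 := by
  have hdecomp : T1 ∩ T2 = ⋃ τ : {e // e ∈ F1} → Bool,
      if extF F1 τ ∈ T1 then Cyl F1 (extF F1 τ) ∩ T2 else (∅ : Set (Config V)) := by
    conv_lhs => rw [depOn_eq_iUnion h1]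
    rw [Set.iUnion_inter]
    refine Set.iUnion_congr fun τ => ?_
    split <;> simp
  have hdis := pairwise_disjoint_cyl_pieces F1
    (fun τ => if extF F1 τ ∈ T1 then Cyl F1 (extF F1 τ) ∩ T2 else (∅ : Set (Config V)))
    (fun τ => by split
                 · exact Set.inter_subset_left
                 · simp)
  have hm : ∀ τ : {e // e ∈ F1} → Bool, MeasurableSet
      (if extF F1 τ ∈ T1 then Cyl F1 (extF F1 τ) ∩ T2 else (∅ : Set (Config V))) := by
    intro τ; split
    · exact (measurableSet_cyl _ _).inter h2.measurableSet
    · exact MeasurableSet.empty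
  rw [hdecomp, measure_iUnion hdis hm]
  rw [measure_depOn μ h1, ENNReal.tsum_mul_right.symm]
  refine tsum_congr fun τ => ?_
  split
  · rw [measure_cyl_inter μ w hcyl _ h2 hd]
  · simp

/-! ### Coordinate sets of graph events -/

/-- All pairs inside a finite vertex set. -/
noncomputable def pairsIn (B : Finset V) : Finset (Sym2 V) :=
  (B ×ˢ B).image fun p => s(p.1, p.2)

lemma mk_mem_pairsIn {B : Finset V} {a b : V} (ha : a ∈ B) (hb : b ∈ B) :
    s(a, b) ∈ pairsIn B :=
  Finset.mem_image.mpr ⟨(a, b), Finset.mem_product.mpr ⟨ha, hb⟩, rfl⟩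

lemma mem_of_mem_pairsIn {B : Finset V} {e : Sym2 V} (he : e ∈ pairsIn B)
    {v : V} (hv : v ∈ e) : v ∈ B := by
  obtain ⟨⟨a, b⟩, hab, rfl⟩ := Finset.mem_image.mp he
  obtain ⟨ha, hb⟩ := Finset.mem_product.mp hab
  rcases Sym2.mem_iff.mp hv with rfl | rfl
  · exact ha
  · exact hb

/-- All pairs inside `S` with at least one endpoint in `C`. -/
noncomputable def touchPairs (S C : Finset V) : Finset (Sym2 V) :=
  ((S ×ˢ S).filter fun p => p.1 ∈ C ∨ p.2 ∈ C).image fun p => s(p.1, p.2)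

lemma mk_mem_touchPairs {S C : Finset V} {a b : V} (ha : a ∈ S) (hb : b ∈ S)
    (h : a ∈ C ∨ b ∈ C) : s(a, b) ∈ touchPairs S C :=
  Finset.mem_image.mpr ⟨(a, b),
    Finset.mem_filter.mpr ⟨Finset.mem_product.mpr ⟨ha, hb⟩, h⟩, rfl⟩

lemma touchPairs_endpoints {S C : Finset V} {e : Sym2 V} (he : e ∈ touchPairs S C) :
    (∀ v ∈ e, v ∈ S) ∧ ∃ v ∈ e, v ∈ C := by
  obtain ⟨⟨a, b⟩, hab, rfl⟩ := Finset.mem_image.mp he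
  obtain ⟨hprod, hor⟩ := Finset.mem_filter.mp hab
  obtain ⟨ha, hb⟩ := Finset.mem_product.mp hprod
  refine ⟨fun v hv => ?_, ?_⟩
  · rcases Sym2.mem_iff.mp hv with rfl | rfl
    · exact ha
    · exact hb
  · rcases hor with h | h
    · exact ⟨a, Sym2.mem_mk_left a b, h⟩
    · exact ⟨b, Sym2.mem_mk_right a b, h⟩

lemma connIn_mono (E : Fin N → Set (Sym2 V)) {ω : Config V} {S1 S2 : Set V}
    (h : S1 ⊆ S2) {a b : V} (hc : ConnIn E ω S1 a b) : ConnIn E ω S2 a b :=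
  by
    unfold ConnIn at hc ⊢
    refine Relation.ReflTransGen.mono ?_ _ _ hc
    intro _ _ huv
    exact ⟨h huv.1, h huv.2.1, huv.2.2.1, huv.2.2.2⟩

lemma depOn_connIn (E : Fin N → Set (Sym2 V)) (B : Finset V) (a b : V) :
    DepOn {ω : Config V | ConnIn E ω ↑B a b} (pairsIn B) := by
  intro ω ω' hag h
  simp only [Set.mem_setOf_eq] at h ⊢
  induction h with
  | refl => exact Relation.ReflTransGen.refl
  | tail hxw hstep ih =>
    obtain ⟨hc, hd, he, ho⟩ := hstep
    refine ih.tail ⟨hc, hd, he, ?_⟩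
    rw [← hag _ (mk_mem_pairsIn (Finset.mem_coe.mp hc) (Finset.mem_coe.mp hd))]
    exact ho

lemma depOn_clusterEq (E : Fin N → Set (Sym2 V)) {S : Finset V} {x : V} (hxS : x ∈ S)
    (C : Finset V) :
    DepOn {ω : Config V | (S.filter fun v => ConnIn E ω ↑S x v) = C} (touchPairs S C) := by
  intro ω ω' hag hC
  simp only [Set.mem_setOf_eq] at hC ⊢
  have hx : x ∈ C := by
    rw [← hC]
    exact Finset.mem_filter.mpr ⟨hxS, Relation.ReflTransGen.refl⟩
  have claim1 : ∀ v, ConnIn E ω ↑S x v → v ∈ C ∧ ConnIn E ω' ↑S x v := by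
    intro v hv
    induction hv with
    | refl => exact ⟨hx, Relation.ReflTransGen.refl⟩
    | tail hxw hstep ih =>
      rename_i w v'
      obtain ⟨hwS, hvS, he, ho⟩ := hstep
      obtain ⟨hwC, hcon'⟩ := ih
      have hvC : v' ∈ C := by
        rw [← hC]
        exact Finset.mem_filter.mpr ⟨Finset.mem_coe.mp hvS, hxw.tail ⟨hwS, hvS, he, ho⟩⟩
      have hedge := mk_mem_touchPairs (Finset.mem_coe.mp hwS) (Finset.mem_coe.mp hvS)
        (Or.inl hwC)
      refine ⟨hvC, hcon'.tail ⟨hwS, hvS, he, ?_⟩⟩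
      rw [← hag _ hedge]
      exact ho
  have claim2 : ∀ v, ConnIn E ω' ↑S x v → v ∈ C := by
    intro v hv
    induction hv with
    | refl => exact hx
    | tail hxw hstep ih =>
      rename_i w v'
      obtain ⟨hwS, hvS, he, ho⟩ := hstep
      have hedge := mk_mem_touchPairs (Finset.mem_coe.mp hwS) (Finset.mem_coe.mp hvS)
        (Or.inl ih)
      have ho' : ω s(w, v') = true := (hag _ hedge).trans ho
      have hwmem : w ∈ S.filter fun v => ConnIn E ω ↑S x v := by rw [hC]; exact ih
      have hwconn : ConnIn E ω ↑S x w := (Finset.mem_filter.mp hwmem).2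
      rw [← hC]
      exact Finset.mem_filter.mpr ⟨Finset.mem_coe.mp hvS, hwconn.tail ⟨hwS, hvS, he, ho'⟩⟩
  ext v
  rw [Finset.mem_filter]
  constructor
  · rintro ⟨hvS, hconn⟩
    exact claim2 v hconn
  · intro hvC
    have hvmem : v ∈ S.filter fun w => ConnIn E ω ↑S x w := by rw [hC]; exact hvC
    obtain ⟨hvS, hconn⟩ := Finset.mem_filter.mp hvmem
    exact ⟨hvS, (claim1 v hconn).2⟩

lemma exit_exists (E : Fin N → Set (Sym2 V)) (ω : Config V) {S A : Finset V} {x u : V}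
    (hxS : x ∈ S) (huS : u ∉ S) (h : ConnIn E ω ↑A x u) :
    ∃ y ∈ S.filter (fun v => ConnIn E ω ↑S x v), ∃ z, z ∉ S ∧ s(y, z) ∈ Eset E ∧
      ω s(y, z) = true ∧
      ConnIn E ω (↑A \ ↑(S.filter fun v => ConnIn E ω ↑S x v)) z u := by
  set C := S.filter fun v => ConnIn E ω ↑S x v with hCdef
  have hxC : x ∈ C := Finset.mem_filter.mpr ⟨hxS, Relation.ReflTransGen.refl⟩
  have huC : u ∉ C := fun hu => huS (Finset.mem_filter.mp hu).1
  suffices H : ∀ v, ConnIn E ω ↑A x v → v ∉ C →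
      ∃ y ∈ C, ∃ z, z ∉ S ∧ s(y, z) ∈ Eset E ∧ ω s(y, z) = true ∧
        ConnIn E ω (↑A \ ↑C) z v from H u h huC
  intro v hv
  induction hv with
  | refl => intro hx'; exact absurd hxC hx'
  | tail hxw hstep ih =>
    rename_i w v'
    intro hvC
    obtain ⟨hwA, hvA, he, ho⟩ := hstep
    by_cases hwC : w ∈ C
    · have hvS : v' ∉ S := by
        intro hvS
        refine hvC (Finset.mem_filter.mpr ⟨hvS, ?_⟩)
        exact (Finset.mem_filter.mp hwC).2.tail
          ⟨Finset.mem_coe.mpr (Finset.mem_filter.mp hwC).1, Finset.mem_coe.mpr hvS, he, ho⟩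
      exact ⟨w, hwC, v', hvS, he, ho, Relation.ReflTransGen.refl⟩
    · obtain ⟨y, hy, z, hz, he', ho', htail⟩ := ih hwC
      refine ⟨y, hy, z, hz, he', ho', htail.tail ⟨⟨hwA, fun h' => hwC (Finset.mem_coe.mp h')⟩,
        ⟨hvA, fun h' => hvC (Finset.mem_coe.mp h')⟩, he, ho⟩⟩

lemma edgeProb_eq_of_mem {E : Fin N → Set (Sym2 V)} (hdisj : DisjointColours E)
    {r : Fin N → ℝ} {e : Sym2 V} {i : Fin N} (he : e ∈ E i) :
    edgeProb E r e = r i := by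
  unfold edgeProb
  rw [Finset.sum_eq_single i]
  · rw [if_pos he]
  · intro j _ hj
    rw [if_neg fun hj' => Set.disjoint_left.mp (hdisj j i hj) hj' he]
  · intro h; exact absurd (Finset.mem_univ i) h

end BKAux

/-- the BK-type bound
`P(x ↔_A u) ≤ Σᵢ Σ_{ {y,z} ∈ ΔS ∩ Eᵢ } pᵢ P(x ↔_S y) P(z ↔_A u)` for `u ∈ A \\ S`. -/
theorem bk_boundary_bound
    {V : Type*} [Countable V] [Infinite V] {N : ℕ} (hN : 0 < N)
    (E : Fin N → Set (Sym2 V))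
    (hdisj : DisjointColours E) (hloops : NoLoops E)
    (hlf : LocFin E) (hconn : ConnectedGraph E)
    (P : (Fin N → ℝ) → Measure (Config V)) (hP : IsPercFamily E P)
    (p : Fin (N - 1) → ℝ) (hp : ∀ i, p i ∈ Icc (0 : ℝ) 1)
    (q : ℝ) (hq : q ∈ Icc (0 : ℝ) 1)
    (x : V) (S : Finset V) (hxS : x ∈ S)
    (A : Finset V) (u : V) (huA : u ∈ A) (huS : u ∉ S) :
    P (pFull N p q) {ω | ConnIn E ω ↑A x u} ≤
      ∑ i : Fin N, ∑ y ∈ S, ∑' z : V,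
        (if z ∉ S ∧ s(y, z) ∈ E i then
          ENNReal.ofReal (pFull N p q i) * P (pFull N p q) {ω | ConnIn E ω ↑S x y} *
            P (pFull N p q) {ω | ConnIn E ω ↑A z u}
        else 0) := by
  classical
  set r := pFull N p q with hrdef
  have hrIcc : ∀ i, r i ∈ Icc (0 : ℝ) 1 := by
    intro i
    simp only [hrdef, pFull]
    split
    · exact hp _
    · exact hq
  obtain ⟨hprob, hcylP⟩ := hP r hrIcc
  set μ := P r with hmudef
  set w : Sym2 V → Bool → ℝ≥0∞ := fun e b =>
    ENNReal.ofReal (if b then edgeProb E r e else 1 - edgeProb E r e) with hwdef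
  have hcyl : ∀ (F : Finset (Sym2 V)) (σ : Sym2 V → Bool),
      μ (Cyl F σ) = ∏ e ∈ F, w e (σ e) := fun F σ => hcylP F σ
  set clus : Config V → Finset V := fun ω => S.filter fun v => ConnIn E ω ↑S x v with hclusdef
  set Gset : Finset V → V → V → Set (Config V) := fun C y z =>
    {ω | y ∈ C ∧ clus ω = C ∧ z ∉ S ∧ s(y, z) ∈ Eset E ∧ ω s(y, z) = true ∧
      ConnIn E ω (↑A \ ↑C) z u} with hGdef
  -- Step 1: inclusion into the union over exit data
  have hsub : {ω : Config V | ConnIn E ω ↑A x u} ⊆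
      ⋃ C ∈ S.powerset, ⋃ y ∈ S, ⋃ z : V, Gset C y z := by
    intro ω hω
    obtain ⟨y, hy, z, hz, he, ho, ht⟩ := exit_exists E ω hxS huS hω
    have hyS : y ∈ S := (Finset.mem_filter.mp hy).1
    refine Set.mem_iUnion₂.mpr ⟨clus ω, Finset.mem_powerset.mpr (Finset.filter_subset _ _), ?_⟩
    refine Set.mem_iUnion₂.mpr ⟨y, hyS, ?_⟩
    exact Set.mem_iUnion.mpr ⟨z, hy, rfl, hz, he, ho, ht⟩
  have hb1 : μ {ω : Config V | ConnIn E ω ↑A x u} ≤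
      ∑ C ∈ S.powerset, ∑ y ∈ S, ∑' z : V, μ (Gset C y z) := by
    refine (measure_mono hsub).trans ?_
    refine (measure_biUnion_finset_le _ _).trans (Finset.sum_le_sum fun C _ => ?_)
    refine (measure_biUnion_finset_le _ _).trans (Finset.sum_le_sum fun y _ => ?_)
    exact measure_iUnion_le _
  -- Step 2: termwise bound via independence
  have hterm : ∀ C ∈ S.powerset, ∀ y ∈ S, ∀ z : V, μ (Gset C y z) ≤
      ∑ i : Fin N, (if z ∉ S ∧ s(y, z) ∈ E i then
        (if y ∈ C then μ {ω : Config V | clus ω = C} else 0) * ENNReal.ofReal (r i) *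
          μ {ω : Config V | ConnIn E ω ↑A z u} else 0) := by
    intro C hC y hyS z
    by_cases hcase : y ∈ C ∧ z ∉ S ∧ s(y, z) ∈ Eset E
    case neg =>
      have hempty : Gset C y z = ∅ := by
        ext ω
        simp only [hGdef, Set.mem_setOf_eq, Set.mem_empty_iff_false, iff_false, not_and]
        intro h1 h2 h3 h4
        exact absurd ⟨h1, h3, h4⟩ hcase
      simp [hempty]
    case pos =>
    obtain ⟨hyC, hzS, heE⟩ := hcase
    obtain ⟨i, hiE⟩ := Set.mem_iUnion.mp heE
    set e0 : Sym2 V := s(y, z) with he0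
    set TC : Set (Config V) := {ω | clus ω = C} with hTC
    set Op : Set (Config V) := {ω : Config V | ω e0 = true} with hOp
    set Tl : Set (Config V) := {ω : Config V | ConnIn E ω ↑(A \ C) z u} with hTl
    have hcoe : (↑(A \ C) : Set V) = (↑A : Set V) \ ↑C := Finset.coe_sdiff A C
    have hGeq : Gset C y z = TC ∩ (Op ∩ Tl) := by
      ext ω
      simp only [hGdef, hTC, hOp, hTl, Set.mem_inter_iff, Set.mem_setOf_eq, hcoe]
      tauto
    have hdep1 : DepOn TC (touchPairs S C) := depOn_clusterEq E hxS C
    have hdepTl : DepOn Tl (pairsIn (A \ C)) := depOn_connIn E (A \ C) z u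
    have hdepOp : DepOn Op {e0} := by
      intro ω ω' hag hω
      have h := hag e0 (Finset.mem_singleton_self e0)
      rw [hOp, Set.mem_setOf_eq, ← h]
      exact hω
    have hdep2 : DepOn (Op ∩ Tl) ({e0} ∪ pairsIn (A \ C)) := by
      intro ω ω' hag hω
      refine ⟨?_, hdepTl ω ω' (fun e he => hag e (Finset.mem_union_right _ he)) hω.2⟩
      have h := hag e0 (Finset.mem_union_left _ (Finset.mem_singleton_self e0))
      rw [hOp, Set.mem_setOf_eq, ← h]
      exact hω.1
    have hd1 : Disjoint (touchPairs S C) ({e0} ∪ pairsIn (A \ C)) := by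
      refine Finset.disjoint_left.mpr fun e he1 he2 => ?_
      obtain ⟨hS', v, hv, hvC⟩ := touchPairs_endpoints he1
      rcases Finset.mem_union.mp he2 with h | h
      · rw [Finset.mem_singleton] at h
        subst h
        exact hzS (hS' z (Sym2.mem_mk_right y z))
      · exact (Finset.mem_sdiff.mp (mem_of_mem_pairsIn h hv)).2 hvC
    have hd2 : Disjoint {e0} (pairsIn (A \ C)) := by
      refine Finset.disjoint_left.mpr fun e he1 he2 => ?_
      rw [Finset.mem_singleton] at he1
      subst he1
      exact (Finset.mem_sdiff.mp (mem_of_mem_pairsIn he2 (Sym2.mem_mk_left y z))).2 hyC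
    have hOpCyl : Op = Cyl {e0} (fun _ => true) := by
      ext ω; simp [hOp, Cyl]
    have hμOp : μ Op = ENNReal.ofReal (r i) := by
      rw [hOpCyl, hcyl, Finset.prod_singleton, hwdef]
      simp only [if_true]
      rw [edgeProb_eq_of_mem hdisj hiE]
    have e2 : μ (Op ∩ Tl) = μ Op * μ Tl := measure_indep μ w hcyl hdepOp hdepTl hd2
    have e1 : μ (TC ∩ (Op ∩ Tl)) = μ TC * (μ Op * μ Tl) := by
      rw [measure_indep μ w hcyl hdep1 hdep2 hd1, e2]
    have hTlmono : μ Tl ≤ μ {ω : Config V | ConnIn E ω ↑A z u} := by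
      refine measure_mono fun ω hω => ?_
      exact connIn_mono E (by rw [hcoe]; exact Set.diff_subset) hω
    calc μ (Gset C y z) = μ TC * (μ Op * μ Tl) := by rw [hGeq, e1]
      _ ≤ μ TC * (ENNReal.ofReal (r i) * μ {ω : Config V | ConnIn E ω ↑A z u}) := by
          rw [hμOp]
          exact mul_le_mul_right (mul_le_mul_right hTlmono _) _
      _ = (if z ∉ S ∧ s(y, z) ∈ E i then
            (if y ∈ C then μ {ω : Config V | clus ω = C} else 0) * ENNReal.ofReal (r i) *
              μ {ω : Config V | ConnIn E ω ↑A z u} else 0) := by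
          rw [if_pos ⟨hzS, hiE⟩, if_pos hyC, mul_assoc, hTC]
      _ ≤ ∑ i : Fin N, (if z ∉ S ∧ s(y, z) ∈ E i then
            (if y ∈ C then μ {ω : Config V | clus ω = C} else 0) * ENNReal.ofReal (r i) *
              μ {ω : Config V | ConnIn E ω ↑A z u} else 0) :=
          Finset.single_le_sum (f := fun i' : Fin N => if z ∉ S ∧ s(y, z) ∈ E i' then
            (if y ∈ C then μ {ω : Config V | clus ω = C} else 0) * ENNReal.ofReal (r i') *
              μ {ω : Config V | ConnIn E ω ↑A z u} else 0)
            (fun j _ => zero_le) (Finset.mem_univ i)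
  -- Step 3: cluster decomposition sums to a connection probability
  have hK : ∀ y ∈ S,
      (∑ C ∈ S.powerset, if y ∈ C then μ {ω : Config V | clus ω = C} else 0) ≤
        μ {ω : Config V | ConnIn E ω ↑S x y} := by
    intro y hyS
    rw [← Finset.sum_filter]
    have hdisjC : ((S.powerset.filter fun C => y ∈ C : Finset (Finset V)) : Set (Finset V)).Pairwise
        (Function.onFun Disjoint fun C => {ω : Config V | clus ω = C}) := by
      intro C1 h1 C2 h2 hne
      refine Set.disjoint_left.mpr fun ω hω1 hω2 => hne ?_
      rw [Set.mem_setOf_eq] at hω1 hω2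
      rw [← hω1, ← hω2]
    have hmC : ∀ C ∈ S.powerset.filter fun C => y ∈ C,
        MeasurableSet {ω : Config V | clus ω = C} :=
      fun C _ => (depOn_clusterEq E hxS C).measurableSet
    rw [← measure_biUnion_finset hdisjC hmC]
    refine measure_mono fun ω hω => ?_
    obtain ⟨C, hCmem, hωC⟩ := Set.mem_iUnion₂.mp hω
    rw [Set.mem_setOf_eq] at hωC
    have hyC : y ∈ C := (Finset.mem_filter.mp hCmem).2
    rw [← hωC] at hyC
    exact (Finset.mem_filter.mp hyC).2
  -- Step 4: assemble
  calc μ {ω : Config V | ConnIn E ω ↑A x u}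
      ≤ ∑ C ∈ S.powerset, ∑ y ∈ S, ∑' z : V, μ (Gset C y z) := hb1
    _ ≤ ∑ C ∈ S.powerset, ∑ y ∈ S, ∑' z : V, ∑ i : Fin N,
          (if z ∉ S ∧ s(y, z) ∈ E i then
            (if y ∈ C then μ {ω : Config V | clus ω = C} else 0) * ENNReal.ofReal (r i) *
              μ {ω : Config V | ConnIn E ω ↑A z u} else 0) :=
        Finset.sum_le_sum fun C hC => Finset.sum_le_sum fun y hy =>
          ENNReal.tsum_le_tsum fun z => hterm C hC y hy z
    _ = ∑ y ∈ S, ∑' z : V, ∑ i : Fin N, ∑ C ∈ S.powerset,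
          (if z ∉ S ∧ s(y, z) ∈ E i then
            (if y ∈ C then μ {ω : Config V | clus ω = C} else 0) * ENNReal.ofReal (r i) *
              μ {ω : Config V | ConnIn E ω ↑A z u} else 0) := by
        rw [Finset.sum_comm]
        refine Finset.sum_congr rfl fun y _ => ?_
        rw [← Summable.tsum_finsetSum fun C _ => ENNReal.summable]
        exact tsum_congr fun z => Finset.sum_comm
    _ ≤ ∑ y ∈ S, ∑' z : V, ∑ i : Fin N,
          (if z ∉ S ∧ s(y, z) ∈ E i then
            ENNReal.ofReal (r i) * μ {ω : Config V | ConnIn E ω ↑S x y} *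
              μ {ω : Config V | ConnIn E ω ↑A z u} else 0) := by
        refine Finset.sum_le_sum fun y hy => ENNReal.tsum_le_tsum fun z =>
          Finset.sum_le_sum fun i _ => ?_
        by_cases hcond : z ∉ S ∧ s(y, z) ∈ E i
        · simp only [if_pos hcond]
          rw [← Finset.sum_mul, ← Finset.sum_mul]
          calc (∑ C ∈ S.powerset, if y ∈ C then μ {ω : Config V | clus ω = C} else 0) *
                ENNReal.ofReal (r i) * μ {ω : Config V | ConnIn E ω ↑A z u}
              ≤ μ {ω : Config V | ConnIn E ω ↑S x y} * ENNReal.ofReal (r i) *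
                  μ {ω : Config V | ConnIn E ω ↑A z u} :=
                mul_le_mul_left (mul_le_mul_left (hK y hy) _) _
            _ = ENNReal.ofReal (r i) * μ {ω : Config V | ConnIn E ω ↑S x y} *
                  μ {ω : Config V | ConnIn E ω ↑A z u} := by
                rw [mul_comm (μ {ω : Config V | ConnIn E ω ↑S x y})]
        · simp [hcond]
    _ = ∑ i : Fin N, ∑ y ∈ S, ∑' z : V,
          (if z ∉ S ∧ s(y, z) ∈ E i then
            ENNReal.ofReal (r i) * μ {ω : Config V | ConnIn E ω ↑S x y} *
              μ {ω : Config V | ConnIn E ω ↑A z u} else 0) := by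
        refine Eq.trans (Finset.sum_congr rfl fun y _ =>
          Summable.tsum_finsetSum fun i _ => ENNReal.summable) ?_
        exact Finset.sum_comm

end InhomPerc
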